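/- Let S_T have density Σ_i λ_i ℓ_i(T, ·) where ℓ_i(T,·) is the lognormal density with parameters (ln s_0 + R(T) − V_i(T)²/2, V_i(T)²), and define σ²_mix(T,y) = Σ_i Λ_i(T,y) ν_i(T)² with Λ_i(T,y) = λ_i ℓ_i(T,y)/Σ_j λ_j ℓ_j(T,y). Then E[S_T σ²_mix(T,S_T)] = s_0 e^{R(T)} Σ_i λ_i ν_i(T)², E[σ²_mix(T,S_T)] = Σ_i λ_i ν_i(T)², and E[S_T] = s_0 e^{R(T)}; hence Cov(S_T, σ²_mix(T,S_T)) = 0. -/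

import Mathlib

open MeasureTheory Finset ProbabilityTheory

/-- Lognormal density with parameters `μ` (log-mean) and `V` (log-variance). -/
noncomputable def lognormDensity (μ V y : ℝ) : ℝ :=
  if 0 < y then
    Real.exp (-(Real.log y - μ)^2 / (2 * V)) / (y * Real.sqrt (2 * Real.pi * V))
  else 0

/-- Zero terminal correlation in the lognormal mixture dynamics: if S_T has density
Σ_i λ_i ℓ_i with ℓ_i lognormal of parameters (ln s_0 + R − V_i²/2, V_i²), and
σ²_mix(y) = Σ_i Λ_i(y) ν_i², then E[S_T σ²_mix(S_T)] = s_0 e^R Σ λ_i ν_i²,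
E[σ²_mix(S_T)] = Σ λ_i ν_i², E[S_T] = s_0 e^R, hence Cov(S_T, σ²_mix(S_T)) = 0. -/
lemma lognormDensity_nonneg (μ v y : ℝ) : 0 ≤ lognormDensity μ v y := by
  unfold lognormDensity
  split
  · rename_i hy
    exact div_nonneg (Real.exp_nonneg _) (mul_nonneg hy.le (Real.sqrt_nonneg _))
  · exact le_rfl

lemma lognormDensity_pos (μ : ℝ) {v y : ℝ} (hv : 0 < v) (hy : 0 < y) :
    0 < lognormDensity μ v y := by
  unfold lognormDensity
  rw [if_pos hy]
  have : 0 < Real.sqrt (2 * Real.pi * v) := Real.sqrt_pos.2 (by positivity)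
  exact div_pos (Real.exp_pos _) (mul_pos hy this)

lemma lognormDensity_of_nonpos (μ v : ℝ) {y : ℝ} (hy : ¬ 0 < y) :
    lognormDensity μ v y = 0 := if_neg hy

lemma measurable_lognormDensity (μ v : ℝ) : Measurable (lognormDensity μ v) := by
  unfold lognormDensity
  apply Measurable.ite (measurableSet_Ioi (a := (0:ℝ)))
  · exact (((Real.measurable_log.sub measurable_const).pow_const 2).neg.div_const _).exp.div
      (measurable_id.mul measurable_const)
  · exact measurable_const

lemma exp_mul_lognorm (μ : ℝ) {v : ℝ} (hv : 0 < v) (x : ℝ) :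
    Real.exp x * lognormDensity μ v (Real.exp x) = gaussianPDFReal μ ⟨v, hv.le⟩ x := by
  unfold lognormDensity gaussianPDFReal
  rw [if_pos (Real.exp_pos x), Real.log_exp]
  erw [NNReal.coe_mk]
  rw [mul_div_assoc', mul_div_mul_left _ _ (Real.exp_pos x).ne', div_eq_inv_mul]

lemma exp_mul_gauss (μ : ℝ) {v : ℝ} (hv : 0 < v) (x : ℝ) :
    Real.exp x * gaussianPDFReal μ ⟨v, hv.le⟩ x
      = Real.exp (μ + v / 2) * gaussianPDFReal (μ + v) ⟨v, hv.le⟩ x := by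
  unfold gaussianPDFReal
  erw [NNReal.coe_mk]
  rw [mul_left_comm, mul_left_comm (Real.exp (μ + v / 2)), ← Real.exp_add, ← Real.exp_add]
  congr 2
  field_simp
  ring

lemma image_exp_univ : Real.exp '' Set.univ = Set.Ioi 0 := by
  rw [Set.image_univ, Real.range_exp]

lemma hderiv : ∀ x ∈ (Set.univ : Set ℝ),
    HasDerivWithinAt Real.exp (Real.exp x) Set.univ x :=
  fun x _ => (Real.hasDerivAt_exp x).hasDerivWithinAt

lemma integral_via_exp (g : ℝ → ℝ) (hsupp : ∀ y : ℝ, ¬ 0 < y → g y = 0) :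
    ∫ y, g y = ∫ x, Real.exp x * g (Real.exp x) := by
  rw [← setIntegral_eq_integral_of_forall_compl_eq_zero
    (s := Set.Ioi (0:ℝ)) (fun y hy => hsupp y hy)]
  rw [← image_exp_univ,
    integral_image_eq_integral_abs_deriv_smul MeasurableSet.univ hderiv
      Real.exp_injective.injOn g]
  rw [Measure.restrict_univ]
  congr 1
  funext x
  rw [Real.abs_exp, smul_eq_mul]

lemma integrable_via_exp (g : ℝ → ℝ) (hsupp : ∀ y : ℝ, ¬ 0 < y → g y = 0)
    (h : Integrable fun x => Real.exp x * g (Real.exp x)) : Integrable g := by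
  have hs : Function.support g ⊆ Set.Ioi 0 := by
    intro y hy
    by_contra hc
    exact hy (hsupp y hc)
  rw [← integrableOn_iff_integrable_of_support_subset hs, ← image_exp_univ,
    integrableOn_image_iff_integrableOn_abs_deriv_smul MeasurableSet.univ hderiv
      Real.exp_injective.injOn g]
  rw [integrableOn_univ]
  refine h.congr (Filter.Eventually.of_forall fun x => ?_)
  simp only [Real.abs_exp, smul_eq_mul]


lemma integrable_lognorm (μ : ℝ) {v : ℝ} (hv : 0 < v) :
    Integrable (lognormDensity μ v) := by
  apply integrable_via_exp _ (fun y hy => lognormDensity_of_nonpos μ v hy)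
  refine (integrable_gaussianPDFReal μ ⟨v, hv.le⟩).congr
    (Filter.Eventually.of_forall fun x => ?_)
  exact (exp_mul_lognorm μ hv x).symm

lemma integral_lognorm (μ : ℝ) {v : ℝ} (hv : 0 < v) :
    ∫ y, lognormDensity μ v y = 1 := by
  rw [integral_via_exp _ (fun y hy => lognormDensity_of_nonpos μ v hy)]
  rw [integral_congr_ae (Filter.Eventually.of_forall fun x => exp_mul_lognorm μ hv x)]
  exact integral_gaussianPDFReal_eq_one μ (v := ⟨v, hv.le⟩) (fun h => hv.ne' (congrArg NNReal.toReal h))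

lemma key2 (μ : ℝ) {v : ℝ} (hv : 0 < v) (x : ℝ) :
    Real.exp x * (Real.exp x * lognormDensity μ v (Real.exp x))
      = Real.exp (μ + v / 2) * gaussianPDFReal (μ + v) ⟨v, hv.le⟩ x := by
  rw [exp_mul_lognorm μ hv x, exp_mul_gauss μ hv x]

lemma integrable_mul_lognorm (μ : ℝ) {v : ℝ} (hv : 0 < v) :
    Integrable (fun y => y * lognormDensity μ v y) := by
  apply integrable_via_exp _ (fun y hy => by
    rw [lognormDensity_of_nonpos μ v hy, mul_zero])
  refine (((integrable_gaussianPDFReal (μ + v) ⟨v, hv.le⟩).const_mul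
    (Real.exp (μ + v / 2)))).congr (Filter.Eventually.of_forall fun x => ?_)
  exact (key2 μ hv x).symm

lemma integral_mul_lognorm (μ : ℝ) {v : ℝ} (hv : 0 < v) :
    ∫ y, y * lognormDensity μ v y = Real.exp (μ + v / 2) := by
  rw [integral_via_exp _ (fun y hy => by rw [lognormDensity_of_nonpos μ v hy, mul_zero])]
  rw [integral_congr_ae (Filter.Eventually.of_forall fun x => key2 μ hv x),
    integral_const_mul, integral_gaussianPDFReal_eq_one (μ + v)
      (v := ⟨v, hv.le⟩) (fun h => hv.ne' (congrArg NNReal.toReal h)), mul_one]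



theorem lognormal_mixture_zero_terminal_covariance
    {Ω : Type*} [MeasurableSpace Ω] (P : Measure Ω) [IsProbabilityMeasure P]
    (S : Ω → ℝ) (hS : Measurable S)
    (n : ℕ) (s0 R : ℝ) (hs0 : 0 < s0)
    (ν V l : Fin n → ℝ) (hν : ∀ i, 0 ≤ ν i) (hV : ∀ i, 0 < V i)
    (hl : ∀ i, 0 ≤ l i) (hsum : ∑ i, l i = 1)
    (q : ℝ → ℝ)
    (hq : q = fun y => ∑ i, l i * lognormDensity (Real.log s0 + R - (V i)^2 / 2) ((V i)^2) y)
    (σ2 : ℝ → ℝ)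
    (hσ2 : σ2 = fun y => ∑ i,
      (l i * lognormDensity (Real.log s0 + R - (V i)^2 / 2) ((V i)^2) y / q y) * (ν i)^2)
    (hlaw : P.map S = volume.withDensity (fun y => ENNReal.ofReal (q y))) :
    (∫ ω, S ω * σ2 (S ω) ∂P) = s0 * Real.exp R * ∑ i, l i * (ν i)^2 ∧
    (∫ ω, σ2 (S ω) ∂P) = ∑ i, l i * (ν i)^2 ∧
    (∫ ω, S ω ∂P) = s0 * Real.exp R ∧
    (∫ ω, S ω * σ2 (S ω) ∂P) - (∫ ω, S ω ∂P) * (∫ ω, σ2 (S ω) ∂P) = 0 := by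
  have hv : ∀ i, (0:ℝ) < (V i)^2 := fun i => pow_pos (hV i) 2
  have hq0 : ∀ y, 0 ≤ q y := by
    intro y; rw [hq]
    exact Finset.sum_nonneg fun i _ => mul_nonneg (hl i) (lognormDensity_nonneg _ _ _)
  have hqpos : ∀ y : ℝ, 0 < y → 0 < q y := by
    intro y hy
    obtain ⟨i, hi⟩ : ∃ i, l i ≠ 0 := by
      by_contra hc; push_neg at hc
      simp [hc] at hsum
    rw [hq]
    refine Finset.sum_pos' (fun j _ => mul_nonneg (hl j) (lognormDensity_nonneg _ _ _))
      ⟨i, Finset.mem_univ i, mul_pos ((hl i).lt_of_ne (Ne.symm hi))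
        (lognormDensity_pos _ (hv i) hy)⟩
  have hqm : Measurable q := by
    rw [hq]
    exact Finset.measurable_sum _ fun i _ => (measurable_lognormDensity _ _).const_mul _
  have hσm : Measurable σ2 := by
    rw [hσ2]
    exact Finset.measurable_sum _ fun i _ =>
      (((measurable_lognormDensity _ _).const_mul _).div hqm).mul_const _
  have master : ∀ f : ℝ → ℝ, Measurable f → ∫ ω, f (S ω) ∂P = ∫ y, q y * f y := by
    intro f hf
    rw [← integral_map hS.aemeasurable hf.aestronglyMeasurable, hlaw]
    have he : (fun y => ENNReal.ofReal (q y)) = (fun y => ((q y).toNNReal : ENNReal)) := rfl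
    rw [he, integral_withDensity_eq_integral_smul hqm.real_toNNReal]
    exact integral_congr_ae (Filter.Eventually.of_forall fun y => by
      simp [NNReal.smul_def, Real.coe_toNNReal _ (hq0 y)])
  have hA : ∀ y, q y * σ2 y
      = ∑ i, l i * (ν i)^2 * lognormDensity (Real.log s0 + R - (V i)^2 / 2) ((V i)^2) y := by
    intro y
    by_cases hy : 0 < y
    · have hqy : q y ≠ 0 := (hqpos y hy).ne'
      rw [hσ2, Finset.mul_sum]
      refine Finset.sum_congr rfl fun i _ => ?_
      field_simp
    · have hz : ∀ i, lognormDensity (Real.log s0 + R - (V i)^2 / 2) ((V i)^2) y = 0 :=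
        fun i => lognormDensity_of_nonpos _ _ hy
      have hqz : q y = 0 := by rw [hq]; simp [hz]
      rw [hσ2, hqz]
      simp [hz]
  have hexp : ∀ i : Fin n,
      Real.exp (Real.log s0 + R - (V i)^2 / 2 + (V i)^2 / 2) = s0 * Real.exp R := by
    intro i
    rw [sub_add_cancel, Real.exp_add, Real.exp_log hs0]
  have I2 : (∫ ω, σ2 (S ω) ∂P) = ∑ i, l i * (ν i)^2 := by
    rw [master σ2 hσm,
      integral_congr_ae (Filter.Eventually.of_forall hA),
      integral_finset_sum _ fun i _ => (integrable_lognorm _ (hv i)).const_mul _]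
    simp_rw [integral_const_mul, integral_lognorm _ (hv _), mul_one]
  have hB : ∀ y, q y * (y * σ2 y)
      = ∑ i, l i * (ν i)^2
          * (y * lognormDensity (Real.log s0 + R - (V i)^2 / 2) ((V i)^2) y) := by
    intro y
    rw [mul_left_comm, hA, Finset.mul_sum]
    exact Finset.sum_congr rfl fun i _ => by ring
  have I1 : (∫ ω, S ω * σ2 (S ω) ∂P) = s0 * Real.exp R * ∑ i, l i * (ν i)^2 := by
    have := master (fun y => y * σ2 y) (measurable_id.mul hσm)
    rw [this, integral_congr_ae (Filter.Eventually.of_forall hB),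
      integral_finset_sum _ fun i _ => (integrable_mul_lognorm _ (hv i)).const_mul _]
    simp_rw [integral_const_mul, integral_mul_lognorm _ (hv _), hexp]
    rw [← Finset.sum_mul, mul_comm]
  have hC : ∀ y : ℝ, q y * y
      = ∑ i, l i * (y * lognormDensity (Real.log s0 + R - (V i)^2 / 2) ((V i)^2) y) := by
    intro y
    rw [hq, Finset.sum_mul]
    exact Finset.sum_congr rfl fun i _ => by ring
  have I3 : (∫ ω, S ω ∂P) = s0 * Real.exp R := by
    have := master (fun y => y) measurable_id
    rw [this, integral_congr_ae (Filter.Eventually.of_forall hC),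
      integral_finset_sum _ fun i _ => (integrable_mul_lognorm _ (hv i)).const_mul _]
    simp_rw [integral_const_mul, integral_mul_lognorm _ (hv _), hexp]
    rw [← Finset.sum_mul, hsum, one_mul]
  exact ⟨I1, I2, I3, by rw [I1, I2, I3]; ring⟩
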